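/- Let ψ: X → (0,∞) be continuous and suppose B_{ψ*τ} admits a strictly positive continuous eigenfunction. Then for every holonomic probability ν̂ with marginal ν, the entropy plus energy is bounded by the log spectral radius: h_a(ν̂) + ∫_X ln ψ dν ≤ ln ρ(B_{ψ*τ}), with equality when ν̂ is the holonomic lifting of a fixed point of the normalized Markov operator L_p. -/

import Mathlib

open MeasureTheory

/-- Gibbs inequality: for probability vectors `q` (nonneg) and `p` (positive),
`∑ q log p ≤ ∑ q log q`. -/
lemma aux_gibbs19 {n : ℕ} (q p : Fin n → ℝ) (hq0 : ∀ i, 0 ≤ q i)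
    (hp : ∀ i, 0 < p i) (hq1 : ∑ i, q i = 1) (hp1 : ∑ i, p i = 1) :
    ∑ i, q i * Real.log (p i) ≤ ∑ i, q i * Real.log (q i) := by
  have key : ∀ i, q i * Real.log (p i) - q i * Real.log (q i) ≤ p i - q i := by
    intro i
    rcases eq_or_lt_of_le (hq0 i) with h0 | h0
    · simp [← h0]
      exact (hp i).le
    · have hlog := Real.log_le_sub_one_of_pos (div_pos (hp i) h0)
      have hld : Real.log (p i / q i) = Real.log (p i) - Real.log (q i) :=
        Real.log_div (hp i).ne' h0.ne'
      rw [hld] at hlog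
      have := mul_le_mul_of_nonneg_left hlog (hq0 i)
      have hne : q i ≠ 0 := h0.ne'
      calc q i * Real.log (p i) - q i * Real.log (q i)
          = q i * (Real.log (p i) - Real.log (q i)) := by ring
        _ ≤ q i * (p i / q i - 1) := this
        _ = p i - q i := by field_simp
  have hsum : ∑ i, (q i * Real.log (p i) - q i * Real.log (q i)) ≤ ∑ i, (p i - q i) :=
    Finset.sum_le_sum (fun i _ => key i)
  rw [Finset.sum_sub_distrib, Finset.sum_sub_distrib, hq1, hp1] at hsum
  linarith

/-- `|t log t| ≤ 1` on `[0,1]`. -/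
lemma aux_tlogt19 {t : ℝ} (h0 : 0 ≤ t) (h1 : t ≤ 1) : |t * Real.log t| ≤ 1 := by
  rcases eq_or_lt_of_le h0 with h | h
  · simp [← h]
  · have hlogle : Real.log t ≤ 0 := Real.log_nonpos h.le h1
    have hinv := Real.log_le_sub_one_of_pos (show (0:ℝ) < t⁻¹ by positivity)
    rw [Real.log_inv] at hinv
    have hti : t * t⁻¹ = 1 := mul_inv_cancel₀ h.ne'
    have h2 : -(t * Real.log t) ≤ 1 - t := by nlinarith
    have h3 : t * Real.log t ≤ 0 := mul_nonpos_of_nonneg_of_nonpos h0 hlogle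
    rw [abs_of_nonpos h3]
    linarith

/-- A measurable function bounded by a constant is integrable on a finite measure. -/
lemma aux_int19 {X : Type*} [MeasurableSpace X] {μ : Measure X} [IsFiniteMeasure μ]
    {f : X → ℝ} (hm : Measurable f) {C : ℝ} (hC : ∀ x, |f x| ≤ C) :
    Integrable f μ :=
  ⟨hm.aestronglyMeasurable,
    HasFiniteIntegral.of_bounded (C := C) (ae_of_all _ (by simpa [Real.norm_eq_abs] using hC))⟩

/-- If `B_{ψ*τ}` has a strictly positive continuous eigenfunction `h` with
eigenvalue `ρ` (the spectral radius), then for every holonomic probability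
measure `ν̂` with marginal `ν` and disintegration weights `q`,
`h_a(ν̂) + ∫ ln ψ dν ≤ ln ρ`, with equality when `ν̂` is the holonomic lifting
of a fixed point of the normalized Markov operator, i.e. when `q` equals the
normalized weights `p_i = (ψ∘τ_i)(h∘τ_i)/(ρh)`. -/
theorem stmt19 {X : Type*} [MetricSpace X] [CompactSpace X]
    [MeasurableSpace X] [BorelSpace X]
    {n : ℕ} (hn : 0 < n)
    (τ : Fin n → X → X) (hτ : ∀ i, Continuous (τ i))
    (ψ : C(X, ℝ)) (hψ : ∀ x, 0 < ψ x)
    (h : C(X, ℝ)) (hh : ∀ x, 0 < h x) (ρ : ℝ) (hρ : 0 < ρ)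
    (heig : ∀ x, ∑ i : Fin n, ψ (τ i x) * h (τ i x) = ρ * h x)
    (νh : Measure (X × Fin n)) [IsProbabilityMeasure νh]
    (hol : ∀ f : C(X, ℝ), ∫ p : X × Fin n, (f (τ p.2 p.1) - f p.1) ∂νh = 0)
    (q : Fin n → X → ℝ) (hqm : ∀ i, Measurable (q i))
    (hq0 : ∀ i x, 0 ≤ q i x) (hq1 : ∀ x, ∑ i, q i x = 1)
    (ν : Measure X) (hν : ν = νh.map Prod.fst)
    (hdis : ∀ F : C(X × Fin n, ℝ),
      ∫ p, F p ∂νh = ∫ x, ∑ i, q i x * F (x, i) ∂ν) :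
    ((-∫ x, ∑ i, q i x * Real.log (q i x) ∂ν) + ∫ x, Real.log (ψ x) ∂ν
        ≤ Real.log ρ) ∧
      ((∀ i x, q i x = ψ (τ i x) * h (τ i x) / (ρ * h x)) →
        (-∫ x, ∑ i, q i x * Real.log (q i x) ∂ν) + ∫ x, Real.log (ψ x) ∂ν
          = Real.log ρ) := by
  haveI : IsProbabilityMeasure ν := by
    rw [hν]; exact Measure.isProbabilityMeasure_map measurable_fst.aemeasurable
  have hqle : ∀ i x, q i x ≤ 1 := fun i x =>
    (hq1 x) ▸ Finset.single_le_sum (fun j _ => hq0 j x) (Finset.mem_univ i)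
  -- integrability of a bounded continuous-composed weighted sum
  have intW : ∀ f : C(X, ℝ), Integrable (fun x => ∑ i, q i x * f (τ i x)) ν := by
    intro f
    refine aux_int19 (Finset.measurable_sum _ fun i _ =>
      (hqm i).mul (f.continuous.comp (hτ i)).measurable) (C := n * ‖f‖) ?_
    intro x
    calc |∑ i, q i x * f (τ i x)| ≤ ∑ i, |q i x * f (τ i x)| :=
          Finset.abs_sum_le_sum_abs _ _
      _ ≤ ∑ _i : Fin n, ‖f‖ := by
          refine Finset.sum_le_sum fun i _ => ?_
          rw [abs_mul]
          have h1 : |q i x| ≤ 1 := by rw [abs_of_nonneg (hq0 i x)]; exact hqle i x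
          have h2 : |f (τ i x)| ≤ ‖f‖ := f.norm_coe_le_norm (τ i x)
          calc |q i x| * |f (τ i x)| ≤ 1 * ‖f‖ :=
                mul_le_mul h1 h2 (abs_nonneg _) zero_le_one
            _ = ‖f‖ := one_mul _
      _ = n * ‖f‖ := by simp [Finset.sum_const, mul_comm]
  have intC : ∀ f : C(X, ℝ), Integrable (fun x => f x) ν := fun f =>
    aux_int19 f.continuous.measurable (C := ‖f‖) (fun x => f.norm_coe_le_norm x)
  -- holonomy transfer
  have key : ∀ f : C(X, ℝ),
      ∫ x, ∑ i, q i x * f (τ i x) ∂ν = ∫ x, f x ∂ν := by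
    intro f
    have cF : Continuous fun p : X × Fin n => f (τ p.2 p.1) - f p.1 :=
      continuous_prod_of_discrete_right.mpr
        (fun i => (f.continuous.comp (hτ i)).sub f.continuous)
    have h1 := hdis ⟨_, cF⟩
    simp only [ContinuousMap.coe_mk] at h1
    rw [hol f] at h1
    have h2 : ∀ x, ∑ i, q i x * (f (τ i x) - f x)
        = (∑ i, q i x * f (τ i x)) - f x := by
      intro x
      rw [show ∀ g : Fin n → ℝ, (∑ i, q i x * (g i - f x))
          = (∑ i, q i x * g i) - (∑ i, q i x) * f x from fun g => by
        rw [Finset.sum_mul, ← Finset.sum_sub_distrib]; exact Finset.sum_congr rfl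
          fun i _ => by ring, hq1 x, one_mul]
    rw [show (fun x => ∑ i, q i x * (f (τ i x) - f x))
        = fun x => (∑ i, q i x * f (τ i x)) - f x from funext h2] at h1
    · rw [integral_sub (intW f) (intC f)] at h1
      linarith
  -- the normalized weights are a positive probability vector
  have hρh : ∀ x, (0:ℝ) < ρ * h x := fun x => mul_pos hρ (hh x)
  have hp_pos : ∀ i x, 0 < ψ (τ i x) * h (τ i x) / (ρ * h x) := fun i x =>
    div_pos (mul_pos (hψ _) (hh _)) (hρh x)
  have hp_sum : ∀ x, ∑ i, ψ (τ i x) * h (τ i x) / (ρ * h x) = 1 := by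
    intro x
    rw [← Finset.sum_div, heig x, div_self (hρh x).ne']
  -- log of the normalized weights
  have logp : ∀ i x, Real.log (ψ (τ i x) * h (τ i x) / (ρ * h x))
      = (Real.log (ψ (τ i x)) + Real.log (h (τ i x))) - (Real.log ρ + Real.log (h x)) := by
    intro i x
    rw [Real.log_div (mul_pos (hψ _) (hh _)).ne' (hρh x).ne',
      Real.log_mul (hψ _).ne' (hh _).ne', Real.log_mul hρ.ne' (hh x).ne']
  -- continuous maps for log ψ + log h and log h
  have clψh : Continuous fun x => Real.log (ψ x) + Real.log (h x) :=
    (ψ.continuous.log fun x => (hψ x).ne').add (h.continuous.log fun x => (hh x).ne')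
  have clψ : Continuous fun x => Real.log (ψ x) :=
    ψ.continuous.log fun x => (hψ x).ne'
  have clh : Continuous fun x => Real.log (h x) :=
    h.continuous.log fun x => (hh x).ne'
  set f₀ : C(X, ℝ) := ⟨fun x => Real.log (ψ x) + Real.log (h x), clψh⟩ with hf₀
  set fψ : C(X, ℝ) := ⟨fun x => Real.log (ψ x), clψ⟩ with hfψ
  set fh : C(X, ℝ) := ⟨fun x => Real.log (h x), clh⟩ with hfh
  -- the main computation
  have pointw : ∀ x, ∑ i, q i x * Real.log (ψ (τ i x) * h (τ i x) / (ρ * h x))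
      = (∑ i, q i x * f₀ (τ i x)) - (Real.log ρ + Real.log (h x)) := by
    intro x
    rw [show (∑ i, q i x * Real.log (ψ (τ i x) * h (τ i x) / (ρ * h x)))
        = (∑ i, q i x * f₀ (τ i x))
          - (∑ i, q i x) * (Real.log ρ + Real.log (h x)) from by
      rw [Finset.sum_mul, ← Finset.sum_sub_distrib]
      exact Finset.sum_congr rfl fun i _ => by rw [logp i x]; simp [hf₀]; ring,
      hq1 x, one_mul]
  have intConst : Integrable (fun x => Real.log ρ + Real.log (h x)) ν := by
    have := (intC fh).add (integrable_const (Real.log ρ) (μ := ν))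
    simpa [add_comm, hfh] using this
  have E : ∫ x, ∑ i, q i x * Real.log (ψ (τ i x) * h (τ i x) / (ρ * h x)) ∂ν
      = (∫ x, Real.log (ψ x) ∂ν) - Real.log ρ := by
    rw [show (fun x => ∑ i, q i x * Real.log (ψ (τ i x) * h (τ i x) / (ρ * h x)))
        = fun x => (∑ i, q i x * f₀ (τ i x)) - (Real.log ρ + Real.log (h x))
        from funext pointw]
    rw [integral_sub (intW f₀) intConst, key f₀]
    have hIh : Integrable (fun x => Real.log (h x)) ν := by
      simpa only [hfh, ContinuousMap.coe_mk] using intC fh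
    have hIψ : Integrable (fun x => Real.log (ψ x)) ν := by
      simpa only [hfψ, ContinuousMap.coe_mk] using intC fψ
    have h1 : ∫ x, f₀ x ∂ν = (∫ x, Real.log (ψ x) ∂ν) + ∫ x, Real.log (h x) ∂ν := by
      simp only [hf₀, ContinuousMap.coe_mk]
      exact integral_add hIψ hIh
    have h2 : ∫ x, (Real.log ρ + Real.log (h x)) ∂ν
        = Real.log ρ + ∫ x, Real.log (h x) ∂ν := by
      rw [integral_add (integrable_const _) hIh]
      simp
    rw [h1, h2]
    ring
  -- integrability of the two entropy-type integrands
  have intQ : Integrable (fun x => ∑ i, q i x * Real.log (q i x)) ν := by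
    refine aux_int19 (Finset.measurable_sum _ fun i _ =>
      (hqm i).mul (Real.measurable_log.comp (hqm i))) (C := n) ?_
    intro x
    calc |∑ i, q i x * Real.log (q i x)| ≤ ∑ i, |q i x * Real.log (q i x)| :=
          Finset.abs_sum_le_sum_abs _ _
      _ ≤ ∑ _i : Fin n, (1:ℝ) :=
          Finset.sum_le_sum fun i _ => aux_tlogt19 (hq0 i x) (hqle i x)
      _ = n := by simp
  have intL : Integrable
      (fun x => ∑ i, q i x * Real.log (ψ (τ i x) * h (τ i x) / (ρ * h x))) ν := by
    rw [show (fun x => ∑ i, q i x * Real.log (ψ (τ i x) * h (τ i x) / (ρ * h x)))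
        = fun x => (∑ i, q i x * f₀ (τ i x)) - (Real.log ρ + Real.log (h x))
        from funext pointw]
    exact (intW f₀).sub intConst
  -- pointwise Gibbs and integration
  have mono : ∫ x, ∑ i, q i x * Real.log (ψ (τ i x) * h (τ i x) / (ρ * h x)) ∂ν
      ≤ ∫ x, ∑ i, q i x * Real.log (q i x) ∂ν := by
    refine integral_mono intL intQ fun x => ?_
    exact aux_gibbs19 (fun i => q i x) (fun i => ψ (τ i x) * h (τ i x) / (ρ * h x))
      (fun i => hq0 i x) (fun i => hp_pos i x) (hq1 x) (hp_sum x)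
  constructor
  · linarith [E ▸ mono, mono, E]
  · intro hq
    have hEq : (fun x => ∑ i, q i x * Real.log (q i x))
        = fun x => ∑ i, q i x * Real.log (ψ (τ i x) * h (τ i x) / (ρ * h x)) := by
      funext x
      exact Finset.sum_congr rfl fun i _ => by rw [hq i x]
    rw [hEq, E]
    ring
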